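/- Let d > 0 be a real number and let n : ℝ → ℝ be continuous, integrable, and nonnegative. Set v := p_d ∗ n, and assume that v and v' are square-integrable on ℝ. Then for every x ∈ ℝ: v'(x)² ≤ (1/(2·d^{3/2}))·( ∫_ℝ v(ξ)² dξ + d·∫_ℝ v'(ξ)² dξ ). -/

import Mathlib

open MeasureTheory Set


/-- The kernel `p_d(x) = (1/(2√d)) exp(-|x|/√d)`. -/
noncomputable def pd (d : ℝ) (x : ℝ) : ℝ :=
  1 / (2 * Real.sqrt d) * Real.exp (-|x| / Real.sqrt d)

section aux
variable {a b : ℝ}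

lemma hasDerivAt_int_Iic (g : ℝ → ℝ) (hg : Continuous g)
    (hint : ∀ b : ℝ, IntegrableOn g (Iic b)) (x : ℝ) :
    HasDerivAt (fun y => ∫ ξ in Iic y, g ξ) (g x) x := by
  have h1 : (fun y => ∫ ξ in Iic y, g ξ)
      = fun y => (∫ ξ in Iic x, g ξ) + ∫ ξ in x..y, g ξ := by
    funext y
    rw [← intervalIntegral.integral_Iic_sub_Iic (hint x) (hint y)]; ring
  rw [h1]
  exact ((hg.integral_hasStrictDerivAt x x).hasDerivAt).const_add _

lemma int_Ici_sub_Ici (g : ℝ → ℝ) (ha : IntegrableOn g (Ici a))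
    (hb : IntegrableOn g (Ici b)) :
    (∫ ξ in Ici a, g ξ) - ∫ ξ in Ici b, g ξ = ∫ ξ in a..b, g ξ := by
  wlog hab : a ≤ b generalizing a b
  · rw [← neg_sub, this hb ha (le_of_not_ge hab), intervalIntegral.integral_symm, neg_neg]
  rw [integral_Ici_eq_integral_Ioi, integral_Ici_eq_integral_Ioi, sub_eq_iff_eq_add,
    intervalIntegral.integral_of_le hab,
    ← setIntegral_union Ioc_disjoint_Ioi_same measurableSet_Ioi
      (ha.mono_set (fun _ h => h.1.le)) (hb.mono_set Ioi_subset_Ici_self),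
    Ioc_union_Ioi_eq_Ioi hab]

lemma hasDerivAt_int_Ici (g : ℝ → ℝ) (hg : Continuous g)
    (hint : ∀ b : ℝ, IntegrableOn g (Ici b)) (x : ℝ) :
    HasDerivAt (fun y => ∫ ξ in Ici y, g ξ) (-(g x)) x := by
  have h1 : (fun y => ∫ ξ in Ici y, g ξ)
      = fun y => (∫ ξ in Ici x, g ξ) - ∫ ξ in x..y, g ξ := by
    funext y
    rw [← int_Ici_sub_Ici g (hint x) (hint y)]; ring
  rw [h1]
  exact ((hg.integral_hasStrictDerivAt x x).hasDerivAt).const_sub _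

end aux


/-- **Uniform a priori bound on `∂ₓv` in the first global existence case.** If `n ≥ 0`
is continuous and integrable, `v := p_d ∗ n`, and `v`, `v'` are square-integrable, then
`v'(x)² ≤ (1/(2 d^{3/2})) (∫ v² + d ∫ v'²)` for every `x`. -/
theorem deriv_uniform_bound (d : ℝ) (hd : 0 < d) (n : ℝ → ℝ)
    (hc : Continuous n) (hi : MeasureTheory.Integrable n) (hpos : ∀ ξ, 0 ≤ n ξ)
    (v : ℝ → ℝ) (hv : v = fun x => ∫ ξ : ℝ, pd d (x - ξ) * n ξ)
    (h2 : MeasureTheory.Integrable (fun ξ => (v ξ) ^ 2))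
    (h2' : MeasureTheory.Integrable (fun ξ => (deriv v ξ) ^ 2)) (x : ℝ) :
    (deriv v x) ^ 2 ≤ 1 / (2 * d ^ ((3 : ℝ) / 2))
      * ((∫ ξ : ℝ, (v ξ) ^ 2) + d * ∫ ξ : ℝ, (deriv v ξ) ^ 2) := by
  set s := Real.sqrt d with hs_def
  have hs : 0 < s := Real.sqrt_pos.2 hd
  have hs2 : s ^ 2 = d := Real.sq_sqrt hd.le
  set c : ℝ := 1 / (2 * s) with hc_def
  have hcpos : 0 < c := by positivity
  set gA : ℝ → ℝ := fun ξ => Real.exp (ξ / s) * n ξ with hgA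
  set gB : ℝ → ℝ := fun ξ => Real.exp (-ξ / s) * n ξ with hgB
  have hgAc : Continuous gA := ((Real.continuous_exp.comp (continuous_id.div_const s)).mul hc)
  have hgBc : Continuous gB :=
    ((Real.continuous_exp.comp (continuous_id.neg.div_const s)).mul hc)
  have hgAi : ∀ b : ℝ, IntegrableOn gA (Iic b) := by
    intro b
    refine Integrable.mono' ((hi.norm.const_mul (Real.exp (b / s))).restrict)
      hgAc.aestronglyMeasurable ?_
    filter_upwards [ae_restrict_mem measurableSet_Iic] with ξ hξ
    simp only [hgA, Real.norm_eq_abs, abs_mul, Real.abs_exp]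
    exact mul_le_mul_of_nonneg_right (Real.exp_le_exp.2 (by gcongr; exact hξ)) (abs_nonneg _)
  have hgBi : ∀ b : ℝ, IntegrableOn gB (Ici b) := by
    intro b
    refine Integrable.mono' ((hi.norm.const_mul (Real.exp (-b / s))).restrict)
      hgBc.aestronglyMeasurable ?_
    filter_upwards [ae_restrict_mem measurableSet_Ici] with ξ hξ
    simp only [hgB, Real.norm_eq_abs, abs_mul, Real.abs_exp]
    exact mul_le_mul_of_nonneg_right
      (Real.exp_le_exp.2 (by gcongr; exact hξ)) (abs_nonneg _)
  set A : ℝ → ℝ := fun y => ∫ ξ in Iic y, gA ξ with hA_def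
  set B : ℝ → ℝ := fun y => ∫ ξ in Ici y, gB ξ with hB_def
  have hApos : ∀ y, 0 ≤ A y := fun y =>
    setIntegral_nonneg measurableSet_Iic fun ξ _ => mul_nonneg (Real.exp_nonneg _) (hpos ξ)
  have hBpos : ∀ y, 0 ≤ B y := fun y =>
    setIntegral_nonneg measurableSet_Ici fun ξ _ => mul_nonneg (Real.exp_nonneg _) (hpos ξ)
  -- representation
  have hrep : ∀ y : ℝ, v y = c * Real.exp (-y / s) * A y + c * Real.exp (y / s) * B y := by
    intro y
    have hint : Integrable (fun ξ => pd d (y - ξ) * n ξ) := by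
      refine Integrable.mono' (hi.norm.const_mul c) ?_ ?_
      · exact ((continuous_const.mul (Real.continuous_exp.comp
          ((continuous_const.sub continuous_id).abs.neg.div_const (Real.sqrt d)))).mul
            hc).aestronglyMeasurable
      · filter_upwards with ξ
        rw [Real.norm_eq_abs, Real.norm_eq_abs, abs_mul]
        unfold pd
        rw [abs_mul, abs_of_nonneg (by positivity : (0:ℝ) ≤ 1 / (2 * Real.sqrt d)),
          Real.abs_exp, ← hs_def, ← hc_def]
        have h1 : Real.exp (-|y - ξ| / s) ≤ 1 := by
          rw [Real.exp_le_one_iff]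
          exact div_nonpos_of_nonpos_of_nonneg (neg_nonpos.2 (abs_nonneg _)) hs.le
        calc c * Real.exp (-|y - ξ| / s) * |n ξ|
            ≤ c * 1 * |n ξ| := by gcongr
          _ = c * |n ξ| := by ring
    rw [hv]
    simp only
    rw [← intervalIntegral.integral_Iic_add_Ioi (b := y) hint.integrableOn hint.integrableOn]
    congr 1
    · rw [← integral_const_mul]
      refine setIntegral_congr_fun measurableSet_Iic fun ξ hξ => ?_
      have : |y - ξ| = y - ξ := abs_of_nonneg (by simpa using hξ)
      unfold pd
      rw [this, ← hs_def, ← hc_def, hgA]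
      have : Real.exp (-(y - ξ) / s) = Real.exp (-y / s) * Real.exp (ξ / s) := by
        rw [← Real.exp_add]; ring_nf
      rw [this]; ring
    · rw [← integral_Ici_eq_integral_Ioi, ← integral_const_mul]
      refine setIntegral_congr_fun measurableSet_Ici fun ξ hξ => ?_
      have : |y - ξ| = -(y - ξ) := abs_of_nonpos (by simpa using hξ)
      unfold pd
      rw [this, ← hs_def, ← hc_def, hgB]
      have : Real.exp (-(-(y - ξ)) / s) = Real.exp (y / s) * Real.exp (-ξ / s) := by
        rw [← Real.exp_add]; ring_nf
      rw [this]; ring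
  -- derivative
  set w : ℝ → ℝ := fun y =>
    c / s * (Real.exp (y / s) * B y - Real.exp (-y / s) * A y) with hw_def
  have hderiv : ∀ y : ℝ, HasDerivAt v (w y) y := by
    intro y
    have hA' : HasDerivAt A (gA y) y := hasDerivAt_int_Iic gA hgAc hgAi y
    have hB' : HasDerivAt B (-(gB y)) y := hasDerivAt_int_Ici gB hgBc hgBi y
    have he1 : HasDerivAt (fun z : ℝ => Real.exp (-z / s))
        (Real.exp (-y / s) * (-1 / s)) y := by
      have : HasDerivAt (fun z : ℝ => -z / s) (-1 / s) y :=
        ((hasDerivAt_id y).neg).div_const s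
      exact this.exp
    have he2 : HasDerivAt (fun z : ℝ => Real.exp (z / s))
        (Real.exp (y / s) * (1 / s)) y := by
      have : HasDerivAt (fun z : ℝ => z / s) (1 / s) y := (hasDerivAt_id y).div_const s
      simpa using this.exp
    have hv_eq : v = fun y => c * Real.exp (-y / s) * A y + c * Real.exp (y / s) * B y :=
      funext hrep
    rw [hv_eq]
    have hsum := (((he1.mul hA').const_mul c).add ((he2.mul hB').const_mul c))
    have harr : (fun z => c * (Real.exp (-z / s) * A z) + c * (Real.exp (z / s) * B z))
        = fun y => c * Real.exp (-y / s) * A y + c * Real.exp (y / s) * B y := by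
      funext z; ring
    replace hsum : HasDerivAt (fun z => c * (Real.exp (-z / s) * A z) + c * (Real.exp (z / s) * B z)) _ y := hsum
    rw [harr] at hsum
    convert hsum using 1
    have hee : Real.exp (-y / s) * Real.exp (y / s) = 1 := by
      rw [← Real.exp_add]; ring_nf; exact Real.exp_zero
    have h1 : Real.exp (-y / s) * gA y = n y := by
      show Real.exp (-y / s) * (Real.exp (y / s) * n y) = n y
      rw [← mul_assoc, hee, one_mul]
    have h2 : Real.exp (y / s) * gB y = n y := by
      show Real.exp (y / s) * (Real.exp (-y / s) * n y) = n y
      rw [← mul_assoc, mul_comm (Real.exp (y / s)), hee, one_mul]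
    rw [hw_def]
    simp only
    linear_combination c * h2 - c * h1
  have hderiv_eq : deriv v = w := funext fun y => (hderiv y).deriv
  -- pointwise bound |v'| ≤ v / s
  have hbound : ∀ y, (deriv v y) ^ 2 ≤ (v y) ^ 2 / d := by
    intro y
    have habs : |w y| ≤ v y / s := by
      rw [hrep y, hw_def]
      simp only
      rw [abs_mul, abs_of_nonneg (by positivity : (0:ℝ) ≤ c / s)]
      have h3 : |Real.exp (y / s) * B y - Real.exp (-y / s) * A y|
          ≤ Real.exp (y / s) * B y + Real.exp (-y / s) * A y := by
        calc |Real.exp (y / s) * B y - Real.exp (-y / s) * A y|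
            ≤ |Real.exp (y / s) * B y| + |Real.exp (-y / s) * A y| := abs_sub _ _
          _ = _ := by
              rw [abs_of_nonneg (mul_nonneg (Real.exp_nonneg _) (hBpos y)),
                abs_of_nonneg (mul_nonneg (Real.exp_nonneg _) (hApos y))]
      calc c / s * |Real.exp (y / s) * B y - Real.exp (-y / s) * A y|
          ≤ c / s * (Real.exp (y / s) * B y + Real.exp (-y / s) * A y) := by
            have : 0 ≤ c / s := by positivity
            exact mul_le_mul_of_nonneg_left h3 this
        _ = (c * Real.exp (-y / s) * A y + c * Real.exp (y / s) * B y) / s := by ring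
    have hwy : (deriv v y) ^ 2 = |w y| ^ 2 := by rw [hderiv_eq, sq_abs]
    calc (deriv v y) ^ 2 = |w y| ^ 2 := hwy
      _ ≤ (v y / s) ^ 2 := pow_le_pow_left₀ (abs_nonneg _) habs 2
      _ = (v y) ^ 2 / d := by rw [div_pow, hs2]
  -- continuity
  have hAc : Continuous A :=
    continuous_iff_continuousAt.2 fun y => (hasDerivAt_int_Iic gA hgAc hgAi y).continuousAt
  have hBc : Continuous B :=
    continuous_iff_continuousAt.2 fun y => (hasDerivAt_int_Ici gB hgBc hgBi y).continuousAt
  have hwc : Continuous w := by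
    rw [hw_def]
    exact continuous_const.mul
      (((Real.continuous_exp.comp (continuous_id.div_const s)).mul hBc).sub
        ((Real.continuous_exp.comp (continuous_id.neg.div_const s)).mul hAc))
  have hvc : Continuous v :=
    continuous_iff_continuousAt.2 fun y => (hderiv y).continuousAt
  -- Sobolev-type bound
  set T1 : ℝ := ∫ ξ : ℝ, (v ξ) ^ 2 with hT1
  set T2 : ℝ := ∫ ξ : ℝ, (deriv v ξ) ^ 2 with hT2
  set φ : ℝ → ℝ := fun ξ => (1 / s) * (v ξ) ^ 2 + s * (deriv v ξ) ^ 2 with hφ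
  have hφint : Integrable φ := (h2.const_mul (1 / s)).add (h2'.const_mul s)
  have hφc : Continuous φ := by
    rw [hφ]
    have : Continuous (deriv v) := hderiv_eq ▸ hwc
    exact (continuous_const.mul (hvc.pow 2)).add (continuous_const.mul (this.pow 2))
  have hφpos : ∀ ξ, 0 ≤ φ ξ := fun ξ => by
    rw [hφ]; positivity
  have hφtot : ∫ ξ : ℝ, φ ξ = (1 / s) * T1 + s * T2 := by
    rw [hφ, hT1, hT2, integral_add (h2.const_mul (1 / s)) (h2'.const_mul s),
      integral_const_mul, integral_const_mul]
  have hptA : ∀ ξ, 2 * v ξ * w ξ ≤ φ ξ := by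
    intro ξ
    rw [hφ]
    simp only
    rw [← hderiv_eq]
    have key : (1 / s) * (v ξ) ^ 2 + s * (deriv v ξ) ^ 2 - 2 * v ξ * deriv v ξ
        = (v ξ - s * deriv v ξ) ^ 2 / s := by field_simp; ring
    have h0 : 0 ≤ (v ξ - s * deriv v ξ) ^ 2 / s := by positivity
    linarith
  have hptB : ∀ ξ, -(2 * v ξ * w ξ) ≤ φ ξ := by
    intro ξ
    rw [hφ]
    simp only
    rw [← hderiv_eq]
    have key : (1 / s) * (v ξ) ^ 2 + s * (deriv v ξ) ^ 2 + 2 * v ξ * deriv v ξ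
        = (v ξ + s * deriv v ξ) ^ 2 / s := by field_simp; ring
    have h0 : 0 ≤ (v ξ + s * deriv v ξ) ^ 2 / s := by positivity
    linarith
  have hsq : ∀ ξ : ℝ, HasDerivAt (fun z => (v z) ^ 2) (2 * v ξ * w ξ) ξ := by
    intro ξ
    have h := (hderiv ξ).mul (hderiv ξ)
    have h2 : (2 : ℝ) * v ξ * w ξ = w ξ * v ξ + v ξ * w ξ := by ring
    rw [h2]
    have h' : HasDerivAt (fun z => v z * v z) (w ξ * v ξ + v ξ * w ξ) ξ := h
    simpa [pow_two] using h'
  have hF : ∀ a b : ℝ, (v b) ^ 2 - (v a) ^ 2 = ∫ ξ in a..b, 2 * v ξ * w ξ := fun a b =>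
    (intervalIntegral.integral_eq_sub_of_hasDerivAt (fun ξ _ => hsq ξ)
      (((continuous_const.mul hvc).mul hwc).intervalIntegrable a b)).symm
  -- left and right tail bounds
  have hIicφ : IntegrableOn φ (Iic x) := hφint.integrableOn
  have hIciφ : IntegrableOn φ (Ici x) := hφint.integrableOn
  have hleft : ∀ a : ℝ, a ≤ x → (v x) ^ 2 ≤ (v a) ^ 2 + ∫ ξ in Iic x, φ ξ := by
    intro a ha
    have h1 : (v x) ^ 2 - (v a) ^ 2 ≤ ∫ ξ in a..x, φ ξ := by
      rw [hF a x]
      exact intervalIntegral.integral_mono_on ha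
        (((continuous_const.mul hvc).mul hwc).intervalIntegrable a x)
        (hφc.intervalIntegrable a x) (fun ξ _ => hptA ξ)
    have h2 : ∫ ξ in a..x, φ ξ ≤ ∫ ξ in Iic x, φ ξ := by
      rw [intervalIntegral.integral_of_le ha]
      refine setIntegral_mono_set hIicφ ?_ ?_
      · filter_upwards with ξ; exact hφpos ξ
      · filter_upwards with ξ hξ; exact hξ.2
    linarith
  have hright : ∀ b : ℝ, x ≤ b → (v x) ^ 2 ≤ (v b) ^ 2 + ∫ ξ in Ici x, φ ξ := by
    intro b hb
    have h1 : (v x) ^ 2 - (v b) ^ 2 ≤ ∫ ξ in x..b, φ ξ := by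
      have := hF x b
      have h2 : (v x) ^ 2 - (v b) ^ 2 = ∫ ξ in x..b, -(2 * v ξ * w ξ) := by
        rw [intervalIntegral.integral_neg, ← this]; ring
      rw [h2]
      exact intervalIntegral.integral_mono_on hb
        (((continuous_const.mul hvc).mul hwc).neg.intervalIntegrable x b)
        (hφc.intervalIntegrable x b) (fun ξ _ => hptB ξ)
    have h2 : ∫ ξ in x..b, φ ξ ≤ ∫ ξ in Ici x, φ ξ := by
      rw [intervalIntegral.integral_of_le hb]
      refine setIntegral_mono_set hIciφ ?_ ?_
      · filter_upwards with ξ; exact hφpos ξ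
      · filter_upwards with ξ hξ; exact hξ.1.le
    linarith
  -- tails of v² are small somewhere
  have hsmall_left : ∀ ε : ℝ, 0 < ε → ∃ a ≤ x, (v a) ^ 2 < ε := by
    intro ε hε
    by_contra h
    push_neg at h
    set I : ℝ := ∫ ξ in Iic x, (v ξ) ^ 2 with hI
    have hIpos : 0 ≤ I := setIntegral_nonneg measurableSet_Iic fun ξ _ => sq_nonneg _
    set N : ℝ := (I + 1) / ε with hN
    have hN0 : 0 ≤ N := by positivity
    have key : ε * N ≤ I := by
      have h1 : ε * N ≤ ∫ ξ in Ioc (x - N) x, (v ξ) ^ 2 := by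
        have hvol : volume (Ioc (x - N) x) = ENNReal.ofReal N := by
          rw [Real.volume_Ioc]; congr 1; ring
        have := setIntegral_ge_of_const_le_real (μ := volume) (s := Ioc (x - N) x) (c := ε)
          measurableSet_Ioc (by rw [hvol]; exact ENNReal.ofReal_ne_top)
          (fun ξ hξ => h ξ (hξ.2))
          (h2.integrableOn)
        rw [measureReal_def, hvol, ENNReal.toReal_ofReal hN0] at this
        linarith [this]
      have h2' : ∫ ξ in Ioc (x - N) x, (v ξ) ^ 2 ≤ I := by
        refine setIntegral_mono_set h2.integrableOn ?_ ?_
        · filter_upwards with ξ; exact sq_nonneg _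
        · filter_upwards with ξ hξ; exact hξ.2
      linarith
    rw [hN] at key
    rw [mul_div_cancel₀ _ (ne_of_gt hε)] at key
    linarith
  have hsmall_right : ∀ ε : ℝ, 0 < ε → ∃ b, x ≤ b ∧ (v b) ^ 2 < ε := by
    intro ε hε
    by_contra h
    push_neg at h
    set I : ℝ := ∫ ξ in Ici x, (v ξ) ^ 2 with hI
    have hIpos : 0 ≤ I := setIntegral_nonneg measurableSet_Ici fun ξ _ => sq_nonneg _
    set N : ℝ := (I + 1) / ε with hN
    have hN0 : 0 ≤ N := by positivity
    have key : ε * N ≤ I := by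
      have h1 : ε * N ≤ ∫ ξ in Ioc x (x + N), (v ξ) ^ 2 := by
        have hvol : volume (Ioc x (x + N)) = ENNReal.ofReal N := by
          rw [Real.volume_Ioc]; congr 1; ring
        have := setIntegral_ge_of_const_le_real (μ := volume) (s := Ioc x (x + N)) (c := ε)
          measurableSet_Ioc (by rw [hvol]; exact ENNReal.ofReal_ne_top)
          (fun ξ hξ => h ξ (hξ.1.le))
          (h2.integrableOn)
        rw [measureReal_def, hvol, ENNReal.toReal_ofReal hN0] at this
        linarith [this]
      have h2' : ∫ ξ in Ioc x (x + N), (v ξ) ^ 2 ≤ I := by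
        refine setIntegral_mono_set h2.integrableOn ?_ ?_
        · filter_upwards with ξ; exact sq_nonneg _
        · filter_upwards with ξ hξ; exact hξ.1.le
      linarith
    rw [hN] at key
    rw [mul_div_cancel₀ _ (ne_of_gt hε)] at key
    linarith
  -- combine
  have hsplit : (∫ ξ in Iic x, φ ξ) + ∫ ξ in Ici x, φ ξ = ∫ ξ : ℝ, φ ξ := by
    rw [integral_Ici_eq_integral_Ioi]
    exact intervalIntegral.integral_Iic_add_Ioi hIicφ hφint.integrableOn
  have hmain : 2 * (v x) ^ 2 ≤ (1 / s) * T1 + s * T2 := by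
    by_contra hlt
    push_neg at hlt
    set ε : ℝ := (2 * (v x) ^ 2 - ((1 / s) * T1 + s * T2)) / 4 with hε_def
    have hε : 0 < ε := by rw [hε_def]; linarith
    obtain ⟨a, ha, hva⟩ := hsmall_left ε hε
    obtain ⟨b, hb, hvb⟩ := hsmall_right ε hε
    have h1 := hleft a ha
    have h2 := hright b hb
    have : 2 * (v x) ^ 2 ≤ (v a) ^ 2 + (v b) ^ 2 + ∫ ξ : ℝ, φ ξ := by
      rw [← hsplit]; linarith
    rw [hφtot] at this
    linarith
  -- finish
  have hfin1 : (deriv v x) ^ 2 ≤ (v x) ^ 2 / d := hbound x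
  have hds : d ^ ((3 : ℝ) / 2) = d * s := by
    rw [show (3 : ℝ) / 2 = 1 + 1 / 2 by norm_num, Real.rpow_add hd, Real.rpow_one,
      hs_def, Real.sqrt_eq_rpow]
  rw [hds]
  have hT2pos : 0 ≤ T2 := integral_nonneg fun ξ => sq_nonneg _
  have h3 : (v x) ^ 2 / d ≤ 1 / (2 * (d * s)) * (T1 + d * T2) := by
    rw [div_le_iff₀ hd]
    have hkey : 2 * s * (v x) ^ 2 ≤ T1 + d * T2 := by
      have := mul_le_mul_of_nonneg_left hmain hs.le
      calc 2 * s * (v x) ^ 2 = s * (2 * (v x) ^ 2) := by ring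
        _ ≤ s * ((1 / s) * T1 + s * T2) := this
        _ = T1 + s ^ 2 * T2 := by field_simp
        _ = T1 + d * T2 := by rw [hs2]
    have h4 : (T1 + d * T2) / (2 * (d * s)) * d = (T1 + d * T2) / (2 * s) := by
      field_simp
    rw [div_mul_eq_mul_div, one_mul, h4, le_div_iff₀ (by positivity : (0:ℝ) < 2 * s)]
    linarith [hkey]
  linarith [hfin1, h3]
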